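/- (Two-way connection achievability) Let (X,+) be a finite abelian group, t,r positive integers, and let I1 be an m1-user instance with side-information sets A_i^1 ⊆ {1,…,m1}\{i} and I2 an m2-user instance with side-information sets A_i^2 ⊆ {1,…,m2}\{i}. Let φ1: X^{m1·t} → X^r be a valid (t,r) index code for I1 and φ2: X^{m2·t} → X^r a valid (t,r) index code for I2. Define the two-way connection I = I1 ↔ I2 as the (m1+m2)-user instance with side-information sets A_i = A_i^1 ∪ {m1+1,…,m1+m2} for i ∈ {1,…,m1} and A_{m1+i} = {m1+j : j ∈ A_i^2} ∪ {1,…,m1} for i ∈ {1,…,m2}. Then the map φ(x^1,x^2) = φ1(x^1) + φ2(x^2) (componentwise sum in X^r), where x^1 ∈ X^{m1·t} and x^2 ∈ X^{m2·t}, is a valid (t,r) index code for I. -/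

import Mathlib

theorem stmt17 {X : Type} [Fintype X] [AddCommGroup X]
    (m1 m2 t r : ℕ) (hm1 : 0 < m1) (hm2 : 0 < m2) (ht : 0 < t) (hr : 0 < r)
    (A1 : Fin m1 → Finset (Fin m1)) (hA1 : ∀ i, i ∉ A1 i)
    (A2 : Fin m2 → Finset (Fin m2)) (hA2 : ∀ i, i ∉ A2 i)
    (φ1 : (Fin m1 → Fin t → X) → (Fin r → X))
    (hφ1 : ∀ (i : Fin m1) (x x' : Fin m1 → Fin t → X),
      φ1 x = φ1 x' → (∀ l ∈ A1 i, ∀ j, x l j = x' l j) → ∀ j, x i j = x' i j)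
    (φ2 : (Fin m2 → Fin t → X) → (Fin r → X))
    (hφ2 : ∀ (i : Fin m2) (x x' : Fin m2 → Fin t → X),
      φ2 x = φ2 x' → (∀ l ∈ A2 i, ∀ j, x l j = x' l j) → ∀ j, x i j = x' i j)
    -- the side-information sets of the two-way connection `I = I1 ↔ I2`
    (A : Fin (m1 + m2) → Finset (Fin (m1 + m2)))
    (hAleft : ∀ i : Fin m1, A (Fin.castAdd m2 i)
      = (A1 i).image (Fin.castAdd m2) ∪ Finset.univ.image (Fin.natAdd m1))
    (hAright : ∀ i : Fin m2, A (Fin.natAdd m1 i)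
      = (A2 i).image (Fin.natAdd m1) ∪ Finset.univ.image (Fin.castAdd m2))
    -- the combined code `φ(x¹, x²) = φ1(x¹) + φ2(x²)`
    (φ : (Fin (m1 + m2) → Fin t → X) → (Fin r → X))
    (hφ : ∀ x : Fin (m1 + m2) → Fin t → X, φ x = fun k =>
      φ1 (fun l => x (Fin.castAdd m2 l)) k + φ2 (fun l => x (Fin.natAdd m1 l)) k) :
    ∀ (i : Fin (m1 + m2)) (x x' : Fin (m1 + m2) → Fin t → X),
      φ x = φ x' → (∀ l ∈ A i, ∀ j, x l j = x' l j) → ∀ j, x i j = x' i j := by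
  intro i x x' heq hside
  rw [hφ x, hφ x'] at heq
  by_cases hi : (i : ℕ) < m1
  · -- left user
    set i0 : Fin m1 := ⟨i, hi⟩ with hi0
    have hieq : i = Fin.castAdd m2 i0 := by ext; rfl
    rw [hieq] at hside
    rw [hAleft i0] at hside
    have hright : ∀ l : Fin m2, ∀ j, x (Fin.natAdd m1 l) j = x' (Fin.natAdd m1 l) j := by
      intro l j
      exact hside _ (Finset.mem_union_right _ (Finset.mem_image_of_mem _ (Finset.mem_univ l))) j
    have h2 : (fun l => x (Fin.natAdd m1 l)) = (fun l => x' (Fin.natAdd m1 l)) := by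
      funext l j; exact hright l j
    have h1 : φ1 (fun l => x (Fin.castAdd m2 l)) = φ1 (fun l => x' (Fin.castAdd m2 l)) := by
      funext k
      have := congrFun heq k
      simp only [h2] at this
      exact add_right_cancel this
    have hs1 : ∀ l ∈ A1 i0, ∀ j, x (Fin.castAdd m2 l) j = x' (Fin.castAdd m2 l) j := by
      intro l hl j
      exact hside _ (Finset.mem_union_left _ (Finset.mem_image_of_mem _ hl)) j
    have := hφ1 i0 _ _ h1 hs1
    intro j
    have h := this j
    rw [hieq]
    exact h
  · -- right user
    have hi2 : (i : ℕ) - m1 < m2 := by omega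
    set i0 : Fin m2 := ⟨(i : ℕ) - m1, hi2⟩ with hi0
    have hieq : i = Fin.natAdd m1 i0 := by
      ext; simp only [Fin.val_natAdd, hi0, Fin.val_mk]; omega
    rw [hieq] at hside
    rw [hAright i0] at hside
    have hleft : ∀ l : Fin m1, ∀ j, x (Fin.castAdd m2 l) j = x' (Fin.castAdd m2 l) j := by
      intro l j
      exact hside _ (Finset.mem_union_right _ (Finset.mem_image_of_mem _ (Finset.mem_univ l))) j
    have h1 : (fun l => x (Fin.castAdd m2 l)) = (fun l => x' (Fin.castAdd m2 l)) := by
      funext l j; exact hleft l j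
    have h2 : φ2 (fun l => x (Fin.natAdd m1 l)) = φ2 (fun l => x' (Fin.natAdd m1 l)) := by
      funext k
      have := congrFun heq k
      simp only [h1] at this
      exact add_left_cancel this
    have hs2 : ∀ l ∈ A2 i0, ∀ j, x (Fin.natAdd m1 l) j = x' (Fin.natAdd m1 l) j := by
      intro l hl j
      exact hside _ (Finset.mem_union_left _ (Finset.mem_image_of_mem _ hl)) j
    have := hφ2 i0 _ _ h2 hs2
    intro j
    rw [hieq]
    exact this j
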